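/- Let s, U ≥ 1, let t ∈ {1, …, 3U}, and let A = {a_1, …, a_s}, B = {b_1, …, b_s}, C be sets of integers in {1, …, U}. Define the 3s²U-dimensional 0/1 vectors M := the concatenation, over all pairs (i, j) ∈ {1, …, s}² in lexicographic order, of the blocks 0^{a_i+b_j} ∘ v_C ∘ 0^{2U−a_i−b_j}, and v := the s²-fold repetition of the block 0^{t−1} ∘ 1 ∘ 0^{3U−t}. Then the inner product of M and v is at least 1 if and only if there exist a ∈ A, b ∈ B, c ∈ C with a + b + c = t. -/

import Mathlib

/-- Characteristic vector (over ℕ) of a set `X ⊆ {1, …, U}`: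
position `i ∈ {1, …, U}` carries a `1` iff `i ∈ X`. -/
def charVec (U : ℕ) (X : Finset ℕ) : List ℕ :=
  (List.range U).map (fun i => if i + 1 ∈ X then 1 else 0)

/-- Inner product of two 0/1 vectors given as lists of equal length. -/
def innerProd (u v : List ℕ) : ℕ := (List.zipWith (· * ·) u v).sum

lemma ip_append (l1 l2 r1 r2 : List ℕ) (h : l1.length = r1.length) :
    innerProd (l1 ++ l2) (r1 ++ r2) = innerProd l1 r1 + innerProd l2 r2 := by
  unfold innerProd
  rw [List.zipWith_append h, List.sum_append]

lemma ip_zero (u : List ℕ) (m : ℕ) :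
    innerProd u (List.replicate m 0) = 0 := by
  induction u generalizing m with
  | nil => simp [innerProd]
  | cons x xs ih =>
    cases m with
    | zero => simp [innerProd]
    | succ m =>
      simp only [List.replicate_succ, innerProd, List.zipWith_cons_cons, List.sum_cons,
        Nat.mul_zero, Nat.zero_add]
      exact ih m

lemma ip_unit (u : List ℕ) (k m : ℕ) :
    innerProd u (List.replicate k 0 ++ 1 :: List.replicate m 0) = u.getD k 0 := by
  induction u generalizing k with
  | nil => simp [innerProd]
  | cons x xs ih =>
    cases k with
    | zero =>
      simp only [List.replicate_zero, List.nil_append, innerProd, List.zipWith_cons_cons,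
        List.sum_cons, Nat.mul_one, List.getD_cons_zero]
      have := ip_zero xs m
      unfold innerProd at this
      omega
    | succ k =>
      simp only [List.replicate_succ, List.cons_append, innerProd, List.zipWith_cons_cons,
        List.sum_cons, Nat.mul_zero, Nat.zero_add, List.getD_cons_succ]
      exact ih k

lemma sum_blocks (L : List (List ℕ)) (w : List ℕ) (h : ∀ x ∈ L, x.length = w.length) :
    innerProd L.flatten (List.replicate L.length w).flatten
      = (L.map (fun x => innerProd x w)).sum := by
  induction L with
  | nil => simp [innerProd]
  | cons x xs ih =>
    simp only [List.flatten_cons, List.length_cons, List.replicate_succ, List.map_cons,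
      List.sum_cons]
    rw [ip_append _ _ _ _ (h x (by simp)), ih (fun y hy => h y (by simp [hy]))]

lemma key (U t p : ℕ) (ht1 : 1 ≤ t) (ht2 : t ≤ 3*U) (hp : p ≤ 2*U)
    (C : Finset ℕ) (hC : C ⊆ Finset.Icc 1 U) :
    (List.replicate p 0 ++ charVec U C ++ List.replicate (2*U - p) 0).getD (t-1) 0 ≠ 0
    ↔ ∃ c ∈ C, p + c = t := by
  have hlen : (charVec U C).length = U := by simp [charVec]
  rw [List.getD_eq_getElem?_getD]
  rcases lt_or_ge (t-1) p with h1 | h1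
  · rw [List.append_assoc, List.getElem?_append]
    simp only [List.length_replicate, h1, if_pos, List.getElem?_replicate, h1, if_pos]
    simp only [Option.getD_some, ne_eq, not_true_eq_false, false_iff, not_exists]
    rintro c ⟨hc, hct⟩
    have := hC hc
    simp only [Finset.mem_Icc] at this
    omega
  · rcases lt_or_ge (t-1) (p + U) with h2 | h2
    · rw [List.append_assoc, List.getElem?_append]
      simp only [List.length_replicate, if_neg (by omega : ¬ t - 1 < p)]
      rw [List.getElem?_append]
      simp only [hlen, if_pos (by omega : t - 1 - p < U)]
      simp only [charVec, List.getElem?_map, List.getElem?_range (by omega : t - 1 - p < U),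
        Option.map_some]
      have heq : t - 1 - p + 1 = t - p := by omega
      rw [heq]
      simp only [Option.getD_some]
      constructor
      · intro h
        refine ⟨t - p, ?_, by omega⟩
        by_contra hc
        simp [hc] at h
      · rintro ⟨c, hc, hct⟩
        have hcv : c = t - p := by omega
        subst hcv
        simp [hc]
    · rw [List.append_assoc, List.getElem?_append]
      simp only [List.length_replicate, if_neg (by omega : ¬ t - 1 < p)]
      rw [List.getElem?_append]
      simp only [hlen, if_neg (by omega : ¬ t - 1 - p < U), List.getElem?_replicate,
        if_pos (by omega : t - 1 - p - U < 2*U - p)]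
      simp only [Option.getD_some, ne_eq, not_true_eq_false, false_iff, not_exists]
      rintro c ⟨hc, hct⟩
      have := hC hc
      simp only [Finset.mem_Icc] at this
      omega

/-- with `A = {a_1,…,a_s}`, `B = {b_1,…,b_s}`, `C` sets of integers
in `{1, …, U}` and a target `t ∈ {1, …, 3U}`, the inner product of
`M = ⋃_{(i,j) lex} 0^{a_i + b_j} v_C 0^{2U - a_i - b_j}` and
`v = (0^{t-1} 1 0^{3U - t})^{s²}` is at least 1 iff there are
`a ∈ A, b ∈ B, c ∈ C` with `a + b + c = t`. -/
theorem stmt8 (s U t : ℕ) (hs : 1 ≤ s) (hU : 1 ≤ U) (ht : t ∈ Finset.Icc 1 (3 * U))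
    (a b : Fin s → ℕ) (ha_inj : Function.Injective a) (hb_inj : Function.Injective b)
    (ha_mem : ∀ i, a i ∈ Finset.Icc 1 U) (hb_mem : ∀ j, b j ∈ Finset.Icc 1 U)
    (C : Finset ℕ) (hC : C ⊆ Finset.Icc 1 U) :
    1 ≤ innerProd
        (((List.finRange s).map (fun i =>
          ((List.finRange s).map (fun j =>
            List.replicate (a i + b j) 0 ++ charVec U C
              ++ List.replicate (2 * U - a i - b j) 0)).flatten)).flatten)
        ((List.replicate (s ^ 2)
          (List.replicate (t - 1) 0 ++ [1] ++ List.replicate (3 * U - t) 0)).flatten)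
      ↔ ∃ i : Fin s, ∃ j : Fin s, ∃ c ∈ C, a i + b j + c = t := by
  simp only [Finset.mem_Icc] at ht
  obtain ⟨ht1, ht2⟩ := ht
  have hab : ∀ i j : Fin s, 1 ≤ a i + b j ∧ a i + b j ≤ 2 * U := by
    intro i j
    have h1 := ha_mem i; have h2 := hb_mem j
    simp only [Finset.mem_Icc] at h1 h2
    omega
  set blk : Fin s → Fin s → List ℕ := fun i j =>
    List.replicate (a i + b j) 0 ++ charVec U C ++ List.replicate (2 * U - a i - b j) 0
    with hblk
  set unit : List ℕ :=
    List.replicate (t - 1) 0 ++ [1] ++ List.replicate (3 * U - t) 0 with hunit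
  have hunit' : unit = List.replicate (t - 1) 0 ++ 1 :: List.replicate (3 * U - t) 0 := by
    rw [hunit, List.append_assoc]; rfl
  have hunit_len : unit.length = 3 * U := by
    simp [hunit]; omega
  have hblk_len : ∀ i j, (blk i j).length = 3 * U := by
    intro i j
    have := hab i j
    simp [hblk, charVec]
    omega
  set Blocks : List (List ℕ) :=
    ((List.finRange s).map (fun i => (List.finRange s).map (blk i))).flatten with hBlocks
  have hM : ((List.finRange s).map (fun i => ((List.finRange s).map (blk i)).flatten)).flatten
      = Blocks.flatten := by
    rw [hBlocks, List.flatten_flatten, List.map_map]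
    rfl
  have hBlen : Blocks.length = s ^ 2 := by
    rw [hBlocks, List.length_flatten, List.map_map]
    simp [Function.comp_def, List.map_const', List.sum_replicate, pow_two]
  have hmem : ∀ x ∈ Blocks, x.length = unit.length := by
    intro x hx
    simp only [hBlocks, List.mem_flatten, List.mem_map] at hx
    obtain ⟨l, ⟨i, _, rfl⟩, hxl⟩ := hx
    simp only [List.mem_map] at hxl
    obtain ⟨j, _, rfl⟩ := hxl
    rw [hblk_len, hunit_len]
  rw [hM, ← hBlen, sum_blocks Blocks unit hmem]
  have sum_fr : ∀ (f : Fin s → ℕ), ((List.finRange s).map f).sum = ∑ i : Fin s, f i := by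
    intro f
    rw [← List.ofFn_eq_map, List.sum_ofFn]
  have hsum : (Blocks.map (fun x => innerProd x unit)).sum
      = ∑ i : Fin s, ∑ j : Fin s, innerProd (blk i j) unit := by
    rw [hBlocks, List.map_flatten, List.map_map, List.sum_flatten, List.map_map, sum_fr]
    refine Finset.sum_congr rfl fun i _ => ?_
    simp only [Function.comp_def, List.map_map]
    rw [sum_fr]
  rw [hsum]
  have hip : ∀ i j : Fin s, innerProd (blk i j) unit = (blk i j).getD (t-1) 0 := by
    intro i j
    rw [hunit', ip_unit]
  constructor
  · intro h
    have hne : ∑ i : Fin s, ∑ j : Fin s, innerProd (blk i j) unit ≠ 0 := by omega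
    rw [Ne, Finset.sum_eq_zero_iff] at hne
    push_neg at hne
    obtain ⟨i, _, hi⟩ := hne
    rw [Ne, Finset.sum_eq_zero_iff] at hi
    push_neg at hi
    obtain ⟨j, _, hj⟩ := hi
    rw [hip] at hj
    have hiff := key U t (a i + b j) ht1 ht2 (hab i j).2 C hC
    have hblk2 : blk i j = List.replicate (a i + b j) 0 ++ charVec U C
        ++ List.replicate (2 * U - (a i + b j)) 0 := by
      simp only [hblk]; rw [Nat.sub_sub]
    rw [hblk2] at hj
    obtain ⟨c, hc, hct⟩ := hiff.mp hj
    exact ⟨i, j, c, hc, hct⟩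
  · rintro ⟨i, j, c, hc, hct⟩
    have hiff := key U t (a i + b j) ht1 ht2 (hab i j).2 C hC
    have hblk2 : blk i j = List.replicate (a i + b j) 0 ++ charVec U C
        ++ List.replicate (2 * U - (a i + b j)) 0 := by
      simp only [hblk]; rw [Nat.sub_sub]
    have hpos : innerProd (blk i j) unit ≠ 0 := by
      rw [hip, hblk2]
      exact hiff.mpr ⟨c, hc, hct⟩
    have hle : innerProd (blk i j) unit ≤ ∑ i : Fin s, ∑ j : Fin s, innerProd (blk i j) unit := by
      calc innerProd (blk i j) unit ≤ ∑ j : Fin s, innerProd (blk i j) unit :=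
            Finset.single_le_sum (f := fun j => innerProd (blk i j) unit)
              (fun _ _ => Nat.zero_le _) (Finset.mem_univ j)
        _ ≤ ∑ i : Fin s, ∑ j : Fin s, innerProd (blk i j) unit :=
            Finset.single_le_sum (f := fun i => ∑ j : Fin s, innerProd (blk i j) unit)
              (fun _ _ => Nat.zero_le _) (Finset.mem_univ i)
    omega
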